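/- Let $G$ be a finite abelian group, let $H$ be a subgroup of $G$, let $\widehat{G}$ denote the group of characters of $G$ with values in $\mathbb{C}^\times$, let $\widehat{G}_H := \{\chi \in \widehat{G} \mid \chi(h) = 1 \text{ for all } h \in H\}$, and let $X \subseteq \widehat{G}$ be a complete set of representatives of the cosets of $\widehat{G}_H$ in $\widehat{G}$. Work in the group algebra $R[G]$ where $R$ is the multivariate polynomial ring $\mathbb{C}[x_g : g \in G]$. For each coset $C \in G/H$ define the group algebra element $Y_C := \sum_{g \in C} x_g \cdot g \in R[G]$, and let $\Theta_{G/H}(Y) \in R[G]$ denote the group determinant polynomial of $G/H$ evaluated at the elements $Y_C$ (i.e., the determinant of the $|G/H| \times |G/H|$ matrix with $(C,D)$ entry $Y_{C D^{-1}}$). Then for each $h \in H$, the coefficient of $h$ in $\Theta_{G/H}(Y)$ is a polynomial with integer coefficients, and it equals $z_h := \frac{1}{|H|} \sum_{\chi \in X} \chi(h)^{-1}\, \Theta_{G/H}\big(y^{\chi}\big)$, where $y^{\chi}_{C} := \sum_{g \in C} \chi(g)\, x_g \in R$. -/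

import Mathlib

open scoped Classical

/-- The group determinant of a finite group `G`: the determinant of the matrix whose
`(g, h)` entry is `x (g * h⁻¹)`. -/
noncomputable def groupDet (G : Type*) [Group G] [Fintype G] {R : Type*} [CommRing R]
    (x : G → R) : R :=
  Matrix.det (Matrix.of fun g h : G => x (g * h⁻¹))

/-! ### Auxiliary lemmas -/

lemma hasEnough' (G : Type*) [CommGroup G] [Finite G] :
    HasEnoughRootsOfUnity ℂ (Monoid.exponent G) := by
  have h : Monoid.exponent G ≠ 0 := Monoid.exponent_ne_zero_of_finite
  have : NeZero ((Monoid.exponent G : ℂ)) := ⟨by exact_mod_cast h⟩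
  infer_instance

lemma card_monoidHom' (G : Type*) [CommGroup G] [Finite G] :
    Nat.card (G →* ℂˣ) = Nat.card G := by
  have := hasEnough' G
  exact Nat.card_congr (CommGroup.monoidHom_mulEquiv_of_hasEnoughRootsOfUnity G ℂ).some.toEquiv

lemma exists_char' (G : Type*) [CommGroup G] [Finite G] {a : G} (ha : a ≠ 1) :
    ∃ φ : G →* ℂˣ, φ a ≠ 1 := by
  have := hasEnough' G
  exact CommGroup.exists_apply_ne_one_of_hasEnoughRootsOfUnity G ℂ ha

/-- the subgroup of characters trivial on H -/
def trivChars {G : Type*} [CommGroup G] (H : Subgroup G) : Subgroup (G →* ℂˣ) where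
  carrier := {χ | ∀ h ∈ H, χ h = 1}
  one_mem' := by intro h hh; rfl
  mul_mem' := by intro a b ha hb h hh; simp [ha h hh, hb h hh]
  inv_mem' := by intro a ha h hh; simp [ha h hh]

lemma card_trivChars {G : Type*} [CommGroup G] [Finite G] (H : Subgroup G) :
    Nat.card (trivChars H) = Nat.card (G ⧸ H) := by
  rw [← card_monoidHom' (G ⧸ H)]
  refine (Nat.card_congr (Equiv.ofBijective
    (fun φ : G ⧸ H →* ℂˣ => (⟨φ.comp (QuotientGroup.mk' H), ?_⟩ : trivChars H)) ⟨?_, ?_⟩)).symm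
  · intro h hh
    simp [trivChars, (QuotientGroup.eq_one_iff h).mpr hh]
  · intro a b hab
    apply MonoidHom.ext
    intro x
    obtain ⟨g, rfl⟩ := QuotientGroup.mk_surjective x
    exact congrArg (fun ψ : trivChars H => (ψ : G →* ℂˣ) g) hab
  · rintro ⟨χ, hχ⟩
    refine ⟨QuotientGroup.lift H χ hχ, ?_⟩
    ext g
    rfl

lemma card_X' {G : Type*} [CommGroup G] [Fintype G] (H : Subgroup G) (X : Finset (G →* ℂˣ))
    (hX : ∀ χ : G →* ℂˣ, ∃! ψ : G →* ℂˣ, ψ ∈ X ∧ ∀ h ∈ H, (ψ⁻¹ * χ) h = 1) :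
    X.card = Nat.card H := by
  classical
  set K := trivChars H
  have hbij : Function.Bijective (fun ψ : X => ((ψ : G →* ℂˣ) : (G →* ℂˣ) ⧸ K)) := by
    constructor
    · rintro ⟨a, ha⟩ ⟨b, hb⟩ hab
      have hmem : a⁻¹ * b ∈ K := (QuotientGroup.eq (s := K)).mp hab
      obtain ⟨ψ, _, huniq⟩ := hX b
      have h1 : a = ψ := huniq a ⟨ha, fun h hh => hmem h hh⟩
      have h2 : b = ψ := huniq b ⟨hb, fun h hh => by simp⟩
      simp [Subtype.ext_iff, h1, h2]
    · intro q
      obtain ⟨χ, rfl⟩ := QuotientGroup.mk_surjective q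
      obtain ⟨ψ, ⟨hψX, hψ⟩, _⟩ := hX χ
      exact ⟨⟨ψ, hψX⟩, (QuotientGroup.eq (s := K)).mpr (fun h hh => hψ h hh)⟩
  have hc : X.card = Nat.card ((G →* ℂˣ) ⧸ K) := by
    rw [← Nat.card_eq_finsetCard]
    exact Nat.card_congr (Equiv.ofBijective _ hbij)
  have lag1 : Nat.card (G →* ℂˣ) = Nat.card ((G →* ℂˣ) ⧸ K) * Nat.card K :=
    Subgroup.card_eq_card_quotient_mul_card_subgroup K
  have lag2 : Nat.card G = Nat.card (G ⧸ H) * Nat.card H :=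
    Subgroup.card_eq_card_quotient_mul_card_subgroup H
  have hGQ : (0:ℕ) < Nat.card (G ⧸ H) := Nat.card_pos
  rw [card_monoidHom' G, card_trivChars H, lag2] at lag1
  rw [hc]
  exact (Nat.eq_of_mul_eq_mul_right hGQ (by linarith [lag1])).symm

lemma charSum' {G : Type*} [CommGroup G] [Fintype G] (H : Subgroup G) (X : Finset (G →* ℂˣ))
    (hX : ∀ χ : G →* ℂˣ, ∃! ψ : G →* ℂˣ, ψ ∈ X ∧ ∀ h ∈ H, (ψ⁻¹ * χ) h = 1)
    {k : G} (hk : k ∈ H) :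
    ∑ χ ∈ X, ((χ k : ℂˣ) : ℂ) = if k = 1 then (Nat.card H : ℂ) else 0 := by
  classical
  by_cases h1 : k = 1
  · subst h1
    simp [card_X' H X hX]
  · rw [if_neg h1]
    set res : (G →* ℂˣ) → (H →* ℂˣ) := fun χ => χ.comp H.subtype with hres
    have resval : ∀ (χ : G →* ℂˣ), res χ ⟨k, hk⟩ = χ k := fun χ => rfl
    set T := X.image res with hTdef
    have hinj : ∀ a ∈ X, ∀ b ∈ X, res a = res b → a = b := by
      intro a ha b hb hab
      obtain ⟨ψ, _, huniq⟩ := hX b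
      have h2 : b = ψ := huniq b ⟨hb, fun h hh => by simp⟩
      have h1' : a = ψ := by
        refine huniq a ⟨ha, fun h hh => ?_⟩
        have : a h = b h := congrArg (fun f : H →* ℂˣ => f ⟨h, hh⟩) hab
        simp [this]
      rw [h1', h2]
    have hsum : ∑ χ ∈ X, ((χ k : ℂˣ) : ℂ) = ∑ τ ∈ T, ((τ ⟨k, hk⟩ : ℂˣ) : ℂ) := by
      rw [hTdef, Finset.sum_image hinj]
      simp [resval]
    have hT : ∀ ψ : G →* ℂˣ, res ψ ∈ T := by
      intro ψ
      obtain ⟨ψ', ⟨hψ'X, hψ'⟩, _⟩ := hX ψ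
      have : res ψ' = res ψ := by
        ext h
        have h2 := hψ' h h.2
        simp only [MonoidHom.mul_apply, MonoidHom.inv_apply, inv_mul_eq_one] at h2
        simp [res, h2]
      exact Finset.mem_image.mpr ⟨ψ', hψ'X, this⟩
    obtain ⟨ψ₀, hψ₀⟩ := exists_char' G h1
    rw [hsum]
    set S := ∑ τ ∈ T, ((τ ⟨k, hk⟩ : ℂˣ) : ℂ) with hS
    have key : ((ψ₀ k : ℂˣ) : ℂ) * S = S := by
      rw [hS, Finset.mul_sum]
      refine Finset.sum_nbij' (i := fun τ => res ψ₀ * τ) (j := fun τ => (res ψ₀)⁻¹ * τ)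
        (fun τ hτ => ?_) (fun τ hτ => ?_) (fun τ _ => inv_mul_cancel_left (res ψ₀) τ)
        (fun τ _ => mul_inv_cancel_left (res ψ₀) τ)
        (fun τ hτ => ?_)
      · obtain ⟨χ, hχ, rfl⟩ := Finset.mem_image.mp hτ
        have h3 : (fun τ => res ψ₀ * τ) (res χ) = res (ψ₀ * χ) := rfl
        show (fun τ => res ψ₀ * τ) (res χ) ∈ T
        rw [h3]; exact hT _
      · obtain ⟨χ, hχ, rfl⟩ := Finset.mem_image.mp hτ
        have h3 : (fun τ => (res ψ₀)⁻¹ * τ) (res χ) = res (ψ₀⁻¹ * χ) := rfl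
        show (fun τ => (res ψ₀)⁻¹ * τ) (res χ) ∈ T
        rw [h3]; exact hT _
      · simp [MonoidHom.mul_apply, resval]
    have hne : ((ψ₀ k : ℂˣ) : ℂ) ≠ 1 := by
      intro hcon
      exact hψ₀ (Units.ext (by simpa using hcon))
    have hz : (((ψ₀ k : ℂˣ) : ℂ) - 1) * S = 0 := by linear_combination key
    rcases mul_eq_zero.mp hz with hc | hc
    · exact absurd (by linear_combination hc) hne
    · exact hc

section support
variable {G : Type*} [CommGroup G] [Fintype G] {R : Type*} [CommRing R]

omit [Fintype G] in
lemma fiber_mul (H : Subgroup G) {a b : MonoidAlgebra R G} {c d : G ⧸ H}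
    (ha : ∀ g : G, a.coeff g ≠ 0 → (g : G ⧸ H) = c) (hb : ∀ g : G, b.coeff g ≠ 0 → (g : G ⧸ H) = d) :
    ∀ g : G, (a * b).coeff g ≠ 0 → (g : G ⧸ H) = c * d := by
  intro g hg
  have hmem : g ∈ (a * b).coeff.support := Finsupp.mem_support_iff.mpr hg
  have := MonoidAlgebra.support_coeff_mul_subset a b hmem
  obtain ⟨x, hx, y, hy, rfl⟩ := Finset.mem_mul.mp this
  rw [QuotientGroup.mk_mul, ha x (Finsupp.mem_support_iff.mp hx),
    hb y (Finsupp.mem_support_iff.mp hy)]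

omit [Fintype G] in
lemma fiber_prod (H : Subgroup G) {ι : Type*} (s : Finset ι) (f : ι → MonoidAlgebra R G)
    (c : ι → G ⧸ H) (hf : ∀ i ∈ s, ∀ g : G, (f i).coeff g ≠ 0 → (g : G ⧸ H) = c i) :
    ∀ g : G, (∏ i ∈ s, f i).coeff g ≠ 0 → (g : G ⧸ H) = ∏ i ∈ s, c i := by
  classical
  induction s using Finset.cons_induction with
  | empty =>
    intro g hg
    rw [Finset.prod_empty] at hg ⊢
    have : (1 : MonoidAlgebra R G).coeff g ≠ 0 := hg
    rw [MonoidAlgebra.one_def] at this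
    by_contra hne
    exact this (Finsupp.single_eq_of_ne' (fun h => hne (by rw [← h]; rfl)) )
  | cons i s hi ih =>
    rw [Finset.prod_cons, Finset.prod_cons]
    exact fiber_mul H (hf i (Finset.mem_cons_self i s))
      (ih (fun j hj => hf j (Finset.mem_cons_of_mem hj)))

lemma fiber_groupDet (H : Subgroup G) (Y : G ⧸ H → MonoidAlgebra R G)
    (hY : ∀ C : G ⧸ H, ∀ g : G, (Y C).coeff g ≠ 0 → (g : G ⧸ H) = C) :
    ∀ g : G, (groupDet (G ⧸ H) Y).coeff g ≠ 0 → (g : G ⧸ H) = 1 := by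
  letI : DecidableEq (G ⧸ H) := fun a b => Classical.propDecidable (a = b)
  intro g hg
  unfold groupDet at hg
  rw [Matrix.det_apply', MonoidAlgebra.coeff_sum, Finset.sum_apply'] at hg
  obtain ⟨σ, -, hσ⟩ := Finset.exists_ne_zero_of_sum_ne_zero hg
  rw [← zsmul_eq_mul, MonoidAlgebra.coeff_smul, Finsupp.smul_apply] at hσ
  have hP : (∏ C : G ⧸ H, (Matrix.of fun C D : G ⧸ H => Y (C * D⁻¹)) (σ C) C).coeff g ≠ 0 := by
    intro h0
    rw [h0] at hσ
    simp at hσ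
  have hfib := fiber_prod H Finset.univ
      (fun C : G ⧸ H => (Matrix.of fun C D : G ⧸ H => Y (C * D⁻¹)) (σ C) C)
      (fun C => σ C * C⁻¹) (fun C _ g hgC => hY _ g hgC) g hP
  rw [hfib, Finset.prod_mul_distrib, Finset.prod_inv_distrib]
  have hperm : (∏ x : G ⧸ H, σ x) = ∏ x : G ⧸ H, x := by
    simpa using Equiv.prod_comp σ (id : G ⧸ H → G ⧸ H)
  rw [hperm]
  simp
end support

lemma map_groupDet {Γ : Type*} [Group Γ] [Fintype Γ] {R S : Type*} [CommRing R] [CommRing S]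
    (f : R →+* S) (x : Γ → R) :
    f (groupDet Γ x) = groupDet Γ fun g => f (x g) := by
  unfold groupDet
  rw [RingHom.map_det]
  rfl

section maps
variable {G : Type*} [CommGroup G]

omit [CommGroup G] in
lemma sum_single_apply {G : Type*} [Group G] {R S : Type*} [CommRing R] [CommRing S]
    (a : MonoidAlgebra R G) (φ : R → S) (hφ : φ 0 = 0) (h : G) :
    (a.coeff.sum fun g r => MonoidAlgebra.single g (φ r)).coeff h = φ (a.coeff h) := by
  classical
  rw [Finsupp.sum, MonoidAlgebra.coeff_sum, Finset.sum_apply']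
  simp only [MonoidAlgebra.coeff_single, Finsupp.single_apply]
  rw [Finset.sum_ite_eq' a.coeff.support h (fun g => φ (a.coeff g))]
  by_cases hmem : h ∈ a.coeff.support
  · rw [if_pos hmem]
  · rw [if_neg hmem, Finsupp.notMem_support_iff.mp hmem, hφ]

noncomputable def mapCoeffs {R S : Type*} [CommRing R] [CommRing S] (f : R →+* S) :
    MonoidAlgebra R G →+* MonoidAlgebra S G :=
  letI : Algebra R (MonoidAlgebra S G) :=
    ((MonoidAlgebra.singleOneRingHom (R := S) (M := G)).comp f).toAlgebra
  (MonoidAlgebra.lift R (MonoidAlgebra S G) G (MonoidAlgebra.of S G)).toRingHom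

lemma mapCoeffs_single {R S : Type*} [CommRing R] [CommRing S] (f : R →+* S) (g : G) (r : R) :
    mapCoeffs f (MonoidAlgebra.single g r) = MonoidAlgebra.single g (f r) := by
  letI : Algebra R (MonoidAlgebra S G) :=
    ((MonoidAlgebra.singleOneRingHom (R := S) (M := G)).comp f).toAlgebra
  show (MonoidAlgebra.lift R (MonoidAlgebra S G) G (MonoidAlgebra.of S G))
      (MonoidAlgebra.single g r) = _
  rw [MonoidAlgebra.lift_single, Algebra.smul_def]
  show MonoidAlgebra.single 1 (f r) * MonoidAlgebra.single g 1 = _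
  rw [MonoidAlgebra.single_mul_single, one_mul, mul_one]

lemma mapCoeffs_apply {R S : Type*} [CommRing R] [CommRing S] (f : R →+* S)
    (a : MonoidAlgebra R G) (h : G) :
    (mapCoeffs f a).coeff h = f (a.coeff h) := by
  have e : mapCoeffs f a = a.coeff.sum fun g r => MonoidAlgebra.single g (f r) := by
    conv_lhs => rw [← MonoidAlgebra.sum_coeff_single a]
    rw [map_finsuppSum]
    exact Finsupp.sum_congr fun g _ => mapCoeffs_single f g _
  rw [e, sum_single_apply _ _ (map_zero f)]

noncomputable def evalChar {σ : Type*} (χ : G →* ℂˣ) :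
    MonoidAlgebra (MvPolynomial σ ℂ) G →+* MvPolynomial σ ℂ :=
  (MonoidAlgebra.lift (MvPolynomial σ ℂ) (MvPolynomial σ ℂ) G
    ((MvPolynomial.C (σ := σ) (R := ℂ)).toMonoidHom.comp
      ((Units.coeHom ℂ).comp χ))).toRingHom

lemma evalChar_single {σ : Type*} (χ : G →* ℂˣ) (g : G) (r : MvPolynomial σ ℂ) :
    evalChar χ (MonoidAlgebra.single g r) = r * MvPolynomial.C ((χ g : ℂˣ) : ℂ) := by
  show (MonoidAlgebra.lift _ _ G _) (MonoidAlgebra.single g r) = _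
  rw [MonoidAlgebra.lift_single, smul_eq_mul]
  rfl

lemma evalChar_apply {σ : Type*} [Fintype G] (χ : G →* ℂˣ)
    (a : MonoidAlgebra (MvPolynomial σ ℂ) G) :
    evalChar χ a = ∑ g : G, a.coeff g * MvPolynomial.C ((χ g : ℂˣ) : ℂ) := by
  show (MonoidAlgebra.lift _ _ G _) a = _
  rw [MonoidAlgebra.lift_apply]
  rw [Finsupp.sum_fintype]
  · refine Finset.sum_congr rfl fun g _ => ?_
    rw [smul_eq_mul]
    rfl
  · intro g
    rw [zero_smul]

end maps

/-- For each `h ∈ H`, the coefficient of `h` in the group-algebra element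
`Θ_{G/H}(Y)` (where `Y_C = ∑_{g ∈ C} x_g · g ∈ R[G]`, `R = ℂ[x_g : g ∈ G]`) has integer
coefficients and equals `z_h = (1/|H|) ∑_{χ ∈ X} χ(h)⁻¹ Θ_{G/H}(y^χ)`. -/
theorem coeff_groupDet_quotient {G : Type*} [CommGroup G] [Fintype G]
    (H : Subgroup G) (X : Finset (G →* ℂˣ))
    (hX : ∀ χ : G →* ℂˣ, ∃! ψ : G →* ℂˣ, ψ ∈ X ∧ ∀ h ∈ H, (ψ⁻¹ * χ) h = 1)
    (h : G) (hh : h ∈ H) :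
    (∃ q : MvPolynomial G ℤ,
      (groupDet (G ⧸ H) (fun C : G ⧸ H =>
          (∑ g ∈ Finset.univ.filter (fun g : G => (QuotientGroup.mk g : G ⧸ H) = C),
            MonoidAlgebra.single g (MvPolynomial.X g) :
          MonoidAlgebra (MvPolynomial G ℂ) G))).coeff h
        = MvPolynomial.map (Int.castRingHom ℂ) q) ∧
    (groupDet (G ⧸ H) (fun C : G ⧸ H =>
        (∑ g ∈ Finset.univ.filter (fun g : G => (QuotientGroup.mk g : G ⧸ H) = C),
          MonoidAlgebra.single g (MvPolynomial.X g) :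
        MonoidAlgebra (MvPolynomial G ℂ) G))).coeff h
      = MvPolynomial.C ((Nat.card H : ℂ)⁻¹) *
          ∑ χ ∈ X, MvPolynomial.C (((χ h)⁻¹ : ℂˣ) : ℂ) *
            groupDet (G ⧸ H) (fun C : G ⧸ H =>
              ∑ g ∈ Finset.univ.filter (fun g : G => (QuotientGroup.mk g : G ⧸ H) = C),
                MvPolynomial.C (χ g : ℂ) * MvPolynomial.X g) := by
  classical
  set Y : G ⧸ H → MonoidAlgebra (MvPolynomial G ℂ) G := fun C : G ⧸ H =>
    (∑ g ∈ Finset.univ.filter (fun g : G => (QuotientGroup.mk g : G ⧸ H) = C),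
      MonoidAlgebra.single g (MvPolynomial.X g) : MonoidAlgebra (MvPolynomial G ℂ) G) with hYdef
  set Θ : MonoidAlgebra (MvPolynomial G ℂ) G := groupDet (G ⧸ H) Y with hΘdef
  -- support of Θ is contained in H
  have hYfib : ∀ C : G ⧸ H, ∀ g : G, (Y C).coeff g ≠ 0 → (g : G ⧸ H) = C := by
    intro C g hg
    rw [hYdef, MonoidAlgebra.coeff_sum, Finset.sum_apply'] at hg
    obtain ⟨g', hg', hne⟩ := Finset.exists_ne_zero_of_sum_ne_zero hg
    have : g' = g := by
      by_contra hgg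
      exact hne (Finsupp.single_eq_of_ne' hgg)
    rw [← this]
    exact (Finset.mem_filter.mp hg').2
  have hsupp : ∀ g : G, g ∉ H → Θ.coeff g = 0 := by
    intro g hg
    by_contra hne
    exact hg ((QuotientGroup.eq_one_iff g).mp (fiber_groupDet H Y hYfib g hne))
  constructor
  · -- integrality
    set f : MvPolynomial G ℤ →+* MvPolynomial G ℂ := MvPolynomial.map (Int.castRingHom ℂ) with hf
    set Yz : G ⧸ H → MonoidAlgebra (MvPolynomial G ℤ) G := fun C : G ⧸ H =>
      ∑ g ∈ Finset.univ.filter (fun g : G => (QuotientGroup.mk g : G ⧸ H) = C),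
        MonoidAlgebra.single g (MvPolynomial.X g) with hYz
    refine ⟨(groupDet (G ⧸ H) Yz).coeff h, ?_⟩
    have hFY : (fun C => mapCoeffs f (Yz C)) = Y := by
      funext C
      rw [hYz, hYdef, map_sum]
      refine Finset.sum_congr rfl fun g _ => ?_
      rw [mapCoeffs_single, hf, MvPolynomial.map_X]
    have : Θ = mapCoeffs f (groupDet (G ⧸ H) Yz) := by
      rw [map_groupDet, hFY, hΘdef]
    rw [this, mapCoeffs_apply]
  · -- character formula
    have heval : ∀ χ : G →* ℂˣ, groupDet (G ⧸ H) (fun C : G ⧸ H =>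
        ∑ g ∈ Finset.univ.filter (fun g : G => (QuotientGroup.mk g : G ⧸ H) = C),
          MvPolynomial.C (χ g : ℂ) * MvPolynomial.X g) = evalChar χ Θ := by
      intro χ
      rw [hΘdef, map_groupDet]
      congr 1
      funext C
      rw [hYdef, map_sum]
      refine Finset.sum_congr rfl fun g _ => ?_
      rw [evalChar_single, mul_comm]
    have hrw : ∑ χ ∈ X, MvPolynomial.C (((χ h)⁻¹ : ℂˣ) : ℂ) *
        groupDet (G ⧸ H) (fun C : G ⧸ H =>
          ∑ g ∈ Finset.univ.filter (fun g : G => (QuotientGroup.mk g : G ⧸ H) = C),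
            MvPolynomial.C (χ g : ℂ) * MvPolynomial.X g)
        = ∑ g : G, Θ.coeff g * MvPolynomial.C
            (∑ χ ∈ X, (((χ h)⁻¹ : ℂˣ) : ℂ) * ((χ g : ℂˣ) : ℂ)) := by
      have step1 : ∀ χ ∈ X, MvPolynomial.C (((χ h)⁻¹ : ℂˣ) : ℂ) *
          groupDet (G ⧸ H) (fun C : G ⧸ H =>
            ∑ g ∈ Finset.univ.filter (fun g : G => (QuotientGroup.mk g : G ⧸ H) = C),
              MvPolynomial.C (χ g : ℂ) * MvPolynomial.X g)
          = ∑ g : G, Θ.coeff g * MvPolynomial.C ((((χ h)⁻¹ : ℂˣ) : ℂ) * ((χ g : ℂˣ) : ℂ)) := by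
        intro χ _
        rw [heval χ, evalChar_apply, Finset.mul_sum]
        refine Finset.sum_congr rfl fun g _ => ?_
        rw [map_mul]
        ring
      rw [Finset.sum_congr rfl step1, Finset.sum_comm]
      refine Finset.sum_congr rfl fun g _ => ?_
      rw [← Finset.mul_sum, ← map_sum]
    rw [hrw, Finset.mul_sum]
    have hcard : (Nat.card H : ℂ) ≠ 0 :=
      Nat.cast_ne_zero.mpr Nat.card_pos.ne'
    have hterm : ∀ g : G, MvPolynomial.C ((Nat.card H : ℂ)⁻¹) *
        (Θ.coeff g * MvPolynomial.C (∑ χ ∈ X, (((χ h)⁻¹ : ℂˣ) : ℂ) * ((χ g : ℂˣ) : ℂ)))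
        = if g = h then Θ.coeff h else 0 := by
      intro g
      by_cases hgH : g ∈ H
      · have hSg : ∑ χ ∈ X, (((χ h)⁻¹ : ℂˣ) : ℂ) * ((χ g : ℂˣ) : ℂ)
            = if h⁻¹ * g = 1 then (Nat.card H : ℂ) else 0 := by
          rw [← charSum' H X hX (mul_mem (inv_mem hh) hgH)]
          refine Finset.sum_congr rfl fun χ _ => ?_
          rw [map_mul, map_inv]
          push_cast
          ring
        by_cases hgh : g = h
        · subst hgh
          rw [if_pos rfl, hSg, if_pos (inv_mul_cancel g)]
          rw [mul_comm (Θ.coeff g) (MvPolynomial.C _), ← mul_assoc, ← MvPolynomial.C_mul,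
            inv_mul_cancel₀ hcard, MvPolynomial.C_1, one_mul]
        · rw [if_neg hgh, hSg, if_neg (fun hcon => hgh (by
            have := inv_mul_eq_one.mp hcon
            exact this.symm)), map_zero]
          ring
      · rw [hsupp g hgH]
        rw [if_neg (fun hcon : g = h => hgH (by rw [hcon]; exact hh))]
        ring
    rw [Finset.sum_congr rfl (fun g _ => hterm g)]
    rw [Finset.sum_ite_eq' Finset.univ h (fun _ => Θ.coeff h)]
    rw [if_pos (Finset.mem_univ h)]
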